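/- (Gentle Measurement Lemma) Let ρ be a density operator and Λ an operator with 0 ≤ Λ ≤ I on a finite-dimensional Hilbert space such that Tr{Λρ} ≥ 1 − ε for some ε ∈ [0,1]. Then ‖√Λ ρ √Λ − ρ‖₁ ≤ 2√ε. -/

import Mathlib

open Matrix
open scoped ComplexOrder

/-- The positive semidefinite square root of a positive semidefinite matrix -/
noncomputable def Matrix.PosSemidef.sqrt {n 𝕜 : Type*} [Fintype n] [DecidableEq n] [RCLike 𝕜]
    {A : Matrix n n 𝕜} (hA : A.PosSemidef) : Matrix n n 𝕜 :=
  hA.1.eigenvectorUnitary.1 * diagonal ((↑) ∘ (√·) ∘ hA.1.eigenvalues) *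
  (star hA.1.eigenvectorUnitary : Matrix n n 𝕜)

/-- The trace norm `‖A‖₁ = Tr √(AᴴA)` of a complex matrix. -/
noncomputable def traceNorm {d : ℕ} (A : Matrix (Fin d) (Fin d) ℂ) : ℝ :=
  ((Matrix.posSemidef_conjTranspose_mul_self A).sqrt.trace).re

/-- The Loewner order: `A ≤ B` iff `B - A` is positive semidefinite. -/
def Loewner {d : ℕ} (A B : Matrix (Fin d) (Fin d) ℂ) : Prop :=
  (B - A).PosSemidef

open scoped MatrixOrder in
lemma Matrix.PosSemidef.sqrt_eq_cfcSqrt {n : Type*} [Fintype n] [DecidableEq n]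
    {A : Matrix n n ℂ} (hA : A.PosSemidef) : hA.sqrt = CFC.sqrt A := by
  rw [CFC.sqrt_eq_cfc, cfc_nnreal_eq_real _ A, hA.1.cfc_eq, Matrix.IsHermitian.cfc,
    Unitary.conjStarAlgAut_apply, Matrix.PosSemidef.sqrt]
  congr 3
  funext x
  simp only [Function.comp_apply, Real.sqrt]

open scoped MatrixOrder in
lemma Matrix.PosSemidef.posSemidef_sqrt {n : Type*} [Fintype n] [DecidableEq n]
    {A : Matrix n n ℂ} (hA : A.PosSemidef) : hA.sqrt.PosSemidef := by
  rw [hA.sqrt_eq_cfcSqrt]; exact Matrix.nonneg_iff_posSemidef.mp (CFC.sqrt_nonneg A)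

open scoped MatrixOrder in
lemma Matrix.PosSemidef.sqrt_mul_self {n : Type*} [Fintype n] [DecidableEq n]
    {A : Matrix n n ℂ} (hA : A.PosSemidef) : hA.sqrt * hA.sqrt = A := by
  rw [hA.sqrt_eq_cfcSqrt]; exact CFC.sqrt_mul_sqrt_self A (Matrix.nonneg_iff_posSemidef.mpr hA)

open scoped MatrixOrder in
lemma Matrix.PosSemidef.eq_sqrt_of_sq_eq {n : Type*} [Fintype n] [DecidableEq n]
    {A : Matrix n n ℂ} (hA : A.PosSemidef) (B : Matrix n n ℂ) (hB : B.PosSemidef)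
    (hAB : A ^ 2 = B) : A = hB.sqrt := by
  rw [hB.sqrt_eq_cfcSqrt, eq_comm, CFC.sqrt_eq_iff B A (Matrix.nonneg_iff_posSemidef.mpr hB)
    (Matrix.nonneg_iff_posSemidef.mpr hA), ← sq, hAB]

namespace GentleAux

variable {d : ℕ}

lemma psd_trace_re_nonneg {A : Matrix (Fin d) (Fin d) ℂ} (hA : A.PosSemidef) :
    0 ≤ A.trace.re := by
  rw [Matrix.trace, Complex.re_sum]
  apply Finset.sum_nonneg
  intro i _
  have := hA.re_dotProduct_nonneg (Pi.single i 1)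
  simpa [dotProduct, Matrix.mulVec, Pi.single_apply, Matrix.diag] using this

lemma psd_mul_psd_trace_re_nonneg {P Q : Matrix (Fin d) (Fin d) ℂ}
    (hP : P.PosSemidef) (hQ : Q.PosSemidef) : 0 ≤ ((P * Q).trace).re := by
  have hq := hQ.posSemidef_sqrt
  have h1 : P * Q = P * hQ.sqrt * hQ.sqrt := by rw [mul_assoc, hQ.sqrt_mul_self]
  have h2 : (P * Q).trace = (hQ.sqrt * P * hQ.sqrt).trace := by
    rw [h1, Matrix.trace_mul_cycle]
  have h3 : (hQ.sqrtᴴ * P * hQ.sqrt).PosSemidef := hP.conjTranspose_mul_mul_same _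
  rw [hq.isHermitian] at h3
  rw [h2]; exact psd_trace_re_nonneg h3

lemma trace_conjTranspose_mul_re (X : Matrix (Fin d) (Fin d) ℂ) :
    ((Xᴴ * X).trace).re = ∑ i, ∑ j, ‖X j i‖ ^ 2 := by
  rw [Matrix.trace, Complex.re_sum]
  congr 1; ext i
  simp only [Matrix.diag, Matrix.mul_apply, Matrix.conjTranspose_apply, Complex.re_sum]
  congr 1; ext j
  have : star (X j i) * X j i = (Complex.normSq (X j i) : ℂ) :=
    (Complex.normSq_eq_conj_mul_self).symm
  rw [this, Complex.sq_norm]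
  simp

lemma trace_cs (X B : Matrix (Fin d) (Fin d) ℂ) :
    ((Xᴴ * B).trace).re ≤ Real.sqrt ((Xᴴ * X).trace).re * Real.sqrt ((Bᴴ * B).trace).re := by
  have h1 : ((Xᴴ * B).trace).re ≤ ∑ i, ∑ j, ‖X j i‖ * ‖B j i‖ := by
    rw [Matrix.trace, Complex.re_sum]
    apply Finset.sum_le_sum; intro i _
    simp only [Matrix.diag, Matrix.mul_apply, Matrix.conjTranspose_apply, Complex.re_sum]
    apply Finset.sum_le_sum; intro j _
    calc (starRingEnd ℂ (X j i) * B j i).re ≤ ‖starRingEnd ℂ (X j i) * B j i‖ :=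
          Complex.re_le_norm _
      _ = ‖X j i‖ * ‖B j i‖ := by
          rw [norm_mul, Complex.norm_conj]
  rw [trace_conjTranspose_mul_re, trace_conjTranspose_mul_re]
  refine h1.trans ?_
  rw [← Finset.sum_product', ← Finset.sum_product', ← Finset.sum_product']
  exact Real.sum_mul_le_sqrt_mul_sqrt _ _ _

lemma trace_cs' {W A B : Matrix (Fin d) (Fin d) ℂ} (hW : Wᴴ * W = 1) :
    ((W * (A * B)).trace).re
      ≤ Real.sqrt ((Aᴴ * A).trace).re * Real.sqrt ((Bᴴ * B).trace).re := by
  have hX : (Aᴴ * Wᴴ)ᴴ = W * A := by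
    rw [Matrix.conjTranspose_mul, Matrix.conjTranspose_conjTranspose,
      Matrix.conjTranspose_conjTranspose]
  have h1 : W * (A * B) = (Aᴴ * Wᴴ)ᴴ * B := by rw [hX, mul_assoc]
  have h2 : ((Aᴴ * Wᴴ)ᴴ * (Aᴴ * Wᴴ)).trace = (Aᴴ * A).trace := by
    rw [hX, Matrix.trace_mul_comm, mul_assoc, ← mul_assoc Wᴴ W, hW, one_mul]
  have := trace_cs (Aᴴ * Wᴴ) B
  rw [h2] at this
  rw [h1]
  exact this

lemma eigenvalues_le_one_of_sq {s : Matrix (Fin d) (Fin d) ℂ} (hs : s.PosSemidef)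
    (h : (1 - s * s).PosSemidef) (i : Fin d) : hs.1.eigenvalues i ≤ 1 := by
  set x := (hs.1.eigenvectorBasis i : EuclideanSpace ℂ (Fin d)) with hxdef
  have hx1 : dotProduct (star (x : Fin d → ℂ)) (x : Fin d → ℂ) = 1 := by
    have hn : ‖x‖ = 1 := hs.1.eigenvectorBasis.orthonormal.1 i
    have h2 : (inner ℂ x x : ℂ) = 1 := by
      rw [inner_self_eq_norm_sq_to_K (𝕜 := ℂ), hn]; norm_num
    rwa [EuclideanSpace.inner_eq_star_dotProduct, dotProduct_comm] at h2
  have hmv : s *ᵥ (x : Fin d → ℂ) = (hs.1.eigenvalues i : ℂ) • (x : Fin d → ℂ) := by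
    have h0 := hs.1.mulVec_eigenvectorBasis i
    funext j
    have := congrFun h0 j
    simpa [Complex.real_smul] using this
  have key := h.re_dotProduct_nonneg (x : Fin d → ℂ)
  have heq : (1 - s * s) *ᵥ (x : Fin d → ℂ)
      = ((1 : ℂ) - (hs.1.eigenvalues i : ℂ)^2) • (x : Fin d → ℂ) := by
    rw [Matrix.sub_mulVec, ← Matrix.mulVec_mulVec, hmv, Matrix.mulVec_smul, hmv,
      Matrix.one_mulVec, smul_smul, sub_smul, one_smul]
    ring_nf
  rw [heq, dotProduct_smul, hx1, smul_eq_mul, mul_one] at key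
  have hre : RCLike.re ((1 : ℂ) - (hs.1.eigenvalues i : ℂ)^2)
      = 1 - (hs.1.eigenvalues i)^2 := by
    simp [← Complex.ofReal_pow]
  rw [hre] at key
  nlinarith [hs.eigenvalues_nonneg i]

section conj
variable {U : Matrix (Fin d) (Fin d) ℂ} (hU1 : (star U) * U = 1) (hU2 : U * (star U) = 1)

include hU1 hU2 in
lemma conj_diag_psd (g : Fin d → ℝ) (hg : ∀ i, 0 ≤ g i) :
    (U * diagonal (RCLike.ofReal ∘ g) * (star U)).PosSemidef := by
  have hd : (diagonal (RCLike.ofReal ∘ g) : Matrix (Fin d) (Fin d) ℂ).PosSemidef := by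
    apply Matrix.PosSemidef.diagonal
    intro i
    simpa using Complex.zero_le_real.mpr (hg i)
  have h := hd.mul_mul_conjTranspose_same U
  rw [← Matrix.star_eq_conjTranspose] at h
  exact h

include hU1 in
lemma conj_diag_mul (g h : Fin d → ℝ) :
    (U * diagonal (RCLike.ofReal ∘ g) * (star U)) * (U * diagonal (RCLike.ofReal ∘ h) * (star U))
      = U * diagonal (RCLike.ofReal ∘ (g * h)) * (star U) := by
  calc U * diagonal (RCLike.ofReal ∘ g) * (star U) * (U * diagonal (RCLike.ofReal ∘ h) * (star U))
      = U * diagonal (RCLike.ofReal ∘ g) * ((star U) * U) * diagonal (RCLike.ofReal ∘ h) * (star U) := by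
        noncomm_ring
    _ = U * (diagonal (RCLike.ofReal ∘ g) * diagonal (RCLike.ofReal ∘ h)) * (star U) := by
        rw [hU1, mul_one, mul_assoc U]
    _ = U * diagonal (RCLike.ofReal ∘ (g * h)) * (star U) := by
        have hdd : (diagonal (RCLike.ofReal ∘ g) : Matrix (Fin d) (Fin d) ℂ)
            * diagonal (RCLike.ofReal ∘ h) = diagonal (RCLike.ofReal ∘ (g * h)) := by
          rw [Matrix.diagonal_mul_diagonal]
          apply congrArg Matrix.diagonal
          funext i
          simp [Pi.mul_apply]
        rw [hdd]

lemma conj_diag_sub (g h : Fin d → ℝ) :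
    (U * diagonal (RCLike.ofReal ∘ g) * (star U)) - (U * diagonal (RCLike.ofReal ∘ h) * (star U))
      = U * diagonal (RCLike.ofReal ∘ (g - h)) * (star U) := by
  have hdd : (diagonal (RCLike.ofReal ∘ g) : Matrix (Fin d) (Fin d) ℂ)
      - diagonal (RCLike.ofReal ∘ h) = diagonal (RCLike.ofReal ∘ (g - h)) := by
    rw [Matrix.diagonal_sub]
    apply congrArg Matrix.diagonal
    funext i
    simp [Pi.sub_apply]
  rw [← hdd]
  noncomm_ring

include hU1 in
lemma conj_diag_trace (g : Fin d → ℝ) :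
    ((U * diagonal (RCLike.ofReal ∘ g) * (star U)).trace).re = ∑ i, g i := by
  rw [Matrix.trace_mul_cycle, hU1, one_mul, Matrix.trace_diagonal]
  simp

end conj

lemma psd_sub_sq {s : Matrix (Fin d) (Fin d) ℂ} (hs : s.PosSemidef)
    (hle : ∀ i, hs.1.eigenvalues i ≤ 1) : (s - s * s).PosSemidef := by
  have hU1 : (star (hs.1.eigenvectorUnitary : Matrix (Fin d) (Fin d) ℂ))
      * (hs.1.eigenvectorUnitary : Matrix (Fin d) (Fin d) ℂ) = 1 := by
    have h2 := hs.1.eigenvectorUnitary.2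
    rwa [Matrix.mem_unitaryGroup_iff'] at h2
  have hU2 : (hs.1.eigenvectorUnitary : Matrix (Fin d) (Fin d) ℂ)
      * (star (hs.1.eigenvectorUnitary : Matrix (Fin d) (Fin d) ℂ)) = 1 := by
    have h2 := hs.1.eigenvectorUnitary.2
    rwa [Matrix.mem_unitaryGroup_iff] at h2
  have hspec := hs.1.spectral_theorem
  rw [Unitary.conjStarAlgAut_apply] at hspec
  have hss : s * s = (hs.1.eigenvectorUnitary : Matrix (Fin d) (Fin d) ℂ)
      * diagonal (RCLike.ofReal ∘ (hs.1.eigenvalues * hs.1.eigenvalues))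
      * (star (hs.1.eigenvectorUnitary : Matrix (Fin d) (Fin d) ℂ)) := by
    conv_lhs => rw [hspec]
    rw [conj_diag_mul hU1]
  have hsub := conj_diag_sub (U := (hs.1.eigenvectorUnitary : Matrix (Fin d) (Fin d) ℂ))
    hs.1.eigenvalues (hs.1.eigenvalues * hs.1.eigenvalues)
  rw [← hspec, ← hss] at hsub
  rw [hsub]
  apply conj_diag_psd hU1 hU2
  intro i
  have h1 := hs.eigenvalues_nonneg i
  have h2 := hle i
  simp only [Pi.sub_apply, Pi.mul_apply]
  nlinarith

lemma traceNorm_herm_witness {M : Matrix (Fin d) (Fin d) ℂ} (hM : M.IsHermitian) :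
    ∃ W : Matrix (Fin d) (Fin d) ℂ,
    Wᴴ * W = 1 ∧ traceNorm M = ((W * M).trace).re := by
  classical
  obtain ⟨U, lam, hU1, hU2, hspec⟩ :
      ∃ (U : Matrix (Fin d) (Fin d) ℂ) (lam : Fin d → ℝ),
        (star U) * U = 1 ∧ U * (star U) = 1
          ∧ M = U * diagonal (RCLike.ofReal ∘ lam) * (star U) := by
    refine ⟨hM.eigenvectorUnitary, hM.eigenvalues, ?_, ?_, by have h := hM.spectral_theorem; rwa [Unitary.conjStarAlgAut_apply] at h⟩
    · have h2 := hM.eigenvectorUnitary.2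
      rwa [Matrix.mem_unitaryGroup_iff'] at h2
    · have h2 := hM.eigenvectorUnitary.2
      rwa [Matrix.mem_unitaryGroup_iff] at h2
  set sg : Fin d → ℝ := fun i => if lam i < 0 then -1 else 1 with hsg
  refine ⟨U * diagonal (RCLike.ofReal ∘ sg) * (star U), ?_, ?_⟩
  · have hD : (diagonal (RCLike.ofReal ∘ sg) : Matrix (Fin d) (Fin d) ℂ)ᴴ
        = diagonal (RCLike.ofReal ∘ sg) := by
      rw [Matrix.diagonal_conjTranspose]
      apply congrArg Matrix.diagonal
      funext i
      simp [Pi.star_apply, Complex.conj_ofReal]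
    have hWherm : (U * diagonal (RCLike.ofReal ∘ sg) * (star U))ᴴ
        = U * diagonal (RCLike.ofReal ∘ sg) * (star U) := by
      rw [Matrix.conjTranspose_mul, Matrix.conjTranspose_mul, hD,
        ← Matrix.star_eq_conjTranspose, ← Matrix.star_eq_conjTranspose, star_star]
      noncomm_ring
    rw [hWherm, conj_diag_mul hU1]
    have hone : (RCLike.ofReal ∘ (sg * sg) : Fin d → ℂ) = fun _ => 1 := by
      funext i
      by_cases hc : lam i < 0 <;> simp [hsg, Pi.mul_apply, hc]
    rw [hone]
    rw [show (diagonal (fun _ => (1:ℂ)) : Matrix (Fin d) (Fin d) ℂ) = 1 from Matrix.diagonal_one]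
    rw [mul_one, hU2]
  · have habs : ∀ i, 0 ≤ |lam i| := fun i => abs_nonneg _
    have hN := conj_diag_psd hU1 hU2 (fun i => |lam i|) habs
    have hNsqrt : U * diagonal (RCLike.ofReal ∘ fun i => |lam i|) * (star U)
        = (Matrix.posSemidef_conjTranspose_mul_self M).sqrt := by
      apply Matrix.PosSemidef.eq_sqrt_of_sq_eq hN
      rw [pow_two, conj_diag_mul hU1, hM.eq]
      conv_rhs => rw [hspec]
      rw [conj_diag_mul hU1]
      have hfun : ((fun i => |lam i|) * fun i => |lam i|) = lam * lam := by
        funext i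
        simp [Pi.mul_apply, abs_mul_abs_self]
      rw [hfun]
    have ht1 : traceNorm M = ∑ i, |lam i| := by
      rw [traceNorm, ← hNsqrt, conj_diag_trace hU1]
    have hWM : (U * diagonal (RCLike.ofReal ∘ sg) * star U) * M
        = U * diagonal (RCLike.ofReal ∘ (sg * lam)) * star U := by
      conv_lhs => rw [hspec]
      rw [conj_diag_mul hU1]
    rw [hWM, conj_diag_trace hU1, ht1]
    apply Finset.sum_congr rfl
    intro i _
    by_cases hc : lam i < 0
    · simp [hsg, Pi.mul_apply, hc, abs_of_neg]
    · simp [hsg, Pi.mul_apply, hc, abs_of_nonneg (not_lt.mp hc)]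


end GentleAux

open GentleAux

/-- Gentle Measurement Lemma: if `0 ≤ Λ ≤ I` and `Tr{Λρ} ≥ 1 − ε` for a density operator `ρ`,
then `‖√Λ ρ √Λ − ρ‖₁ ≤ 2√ε`. -/
theorem gentle_measurement {d : ℕ} (ρ Λ : Matrix (Fin d) (Fin d) ℂ) (ε : ℝ)
    (hρ : ρ.PosSemidef) (hρtr : ρ.trace = 1)
    (hΛ : Λ.PosSemidef) (hΛI : Loewner Λ 1)
    (hε : 0 ≤ ε) (hε1 : ε ≤ 1)
    (hsucc : 1 - ε ≤ ((Λ * ρ).trace).re) :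
    traceNorm (hΛ.sqrt * ρ * hΛ.sqrt - ρ) ≤ 2 * Real.sqrt ε := by
  classical
  set s := hΛ.sqrt with hsdef
  have hs : s.PosSemidef := hΛ.posSemidef_sqrt
  set r := hρ.sqrt with hrdef
  have hr : r.PosSemidef := hρ.posSemidef_sqrt
  have hss : s * s = Λ := hΛ.sqrt_mul_self
  have hrr : r * r = ρ := hρ.sqrt_mul_self
  set M := s * ρ * s - ρ with hMdef
  have hMherm : M.IsHermitian := by
    show Mᴴ = M
    rw [hMdef]
    rw [Matrix.conjTranspose_sub, Matrix.conjTranspose_mul, Matrix.conjTranspose_mul,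
      hs.1.eq, hρ.1.eq, mul_assoc]
  obtain ⟨W, hW1, hWtr⟩ := traceNorm_herm_witness hMherm
  have hdecomp : M = (s * r) * (r * (s - 1)) + ((s - 1) * r) * r := by
    have h0 : (s * r) * (r * (s - 1)) + ((s - 1) * r) * r = s * (r * r) * s - (r * r) := by
      noncomm_ring
    rw [hMdef, h0, hrr]
  have hsplit : ((W * M).trace).re
      = ((W * ((s * r) * (r * (s - 1)))).trace).re
        + ((W * (((s - 1) * r) * r)).trace).re := by
    conv_lhs => rw [hdecomp]
    rw [mul_add, Matrix.trace_add, Complex.add_re]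
  have hA1 : ((s * r)ᴴ * (s * r)).trace = (Λ * ρ).trace := by
    rw [Matrix.conjTranspose_mul, hs.1.eq, hr.1.eq]
    have h0 : (r * s) * (s * r) = r * ((s * s) * r) := by noncomm_ring
    rw [h0, Matrix.trace_mul_comm, mul_assoc, hss, hrr]
  have hB2 : (rᴴ * r).trace = 1 := by rw [hr.1.eq, hrr, hρtr]
  have hT : ((r * (s - 1))ᴴ * (r * (s - 1))).trace = (((s - 1) * (s - 1)) * ρ).trace := by
    rw [Matrix.conjTranspose_mul, Matrix.conjTranspose_sub, Matrix.conjTranspose_one,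
      hs.1.eq, hr.1.eq]
    have h0 : ((s - 1) * r) * (r * (s - 1)) = (s - 1) * (r * r) * (s - 1) := by noncomm_ring
    rw [h0, hrr, Matrix.trace_mul_cycle]
  have hT2 : (((s - 1) * r)ᴴ * ((s - 1) * r)).trace = (((s - 1) * (s - 1)) * ρ).trace := by
    rw [Matrix.conjTranspose_mul, Matrix.conjTranspose_sub, Matrix.conjTranspose_one,
      hs.1.eq, hr.1.eq]
    have h0 : (r * (s - 1)) * ((s - 1) * r) = r * (((s - 1) * (s - 1)) * r) := by noncomm_ring
    rw [h0, Matrix.trace_mul_comm, mul_assoc, hrr]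
  -- bounds
  have hΛρ1 : ((Λ * ρ).trace).re ≤ 1 := by
    have h0 := psd_mul_psd_trace_re_nonneg hΛI hρ
    have h1 : ((1 - Λ) * ρ).trace = ρ.trace - (Λ * ρ).trace := by
      rw [sub_mul, one_mul, Matrix.trace_sub]
    rw [h1, hρtr, Complex.sub_re, Complex.one_re] at h0
    linarith
  have hΛρ0 : 0 ≤ ((Λ * ρ).trace).re := psd_mul_psd_trace_re_nonneg hΛ hρ
  have h1ss : (1 - s * s).PosSemidef := by rw [hss]; exact hΛI
  have h2s : (s - s * s).PosSemidef :=
    psd_sub_sq hs (eigenvalues_le_one_of_sq hs h1ss)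
  have hTb : ((((s - 1) * (s - 1)) * ρ).trace).re ≤ ε := by
    have h0 := psd_mul_psd_trace_re_nonneg h2s hρ
    have halg : ((1 : Matrix (Fin d) (Fin d) ℂ) - Λ)
        = ((s - 1) * (s - 1)) + ((s - s * s) + (s - s * s)) := by
      rw [← hss]; noncomm_ring
    have hexp : (((1 : Matrix (Fin d) (Fin d) ℂ) - Λ) * ρ).trace.re
        = ((((s - 1) * (s - 1)) * ρ).trace).re
          + ((((s - s * s) * ρ).trace).re + (((s - s * s) * ρ).trace).re) := by
      rw [halg, add_mul, add_mul, Matrix.trace_add, Matrix.trace_add,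
        Complex.add_re, Complex.add_re]
    have h1 : (((1 : Matrix (Fin d) (Fin d) ℂ) - Λ) * ρ).trace.re
        = 1 - ((Λ * ρ).trace).re := by
      rw [sub_mul, one_mul, Matrix.trace_sub, Complex.sub_re, hρtr, Complex.one_re]
    rw [h1] at hexp
    linarith
  -- Cauchy-Schwarz applications
  have e1 := trace_cs' (A := s * r) (B := r * (s - 1)) hW1
  rw [hA1, hT] at e1
  have e2 := trace_cs' (A := (s - 1) * r) (B := r) hW1
  rw [hT2, hB2, Complex.one_re, Real.sqrt_one, mul_one] at e2
  have s1 : Real.sqrt (((Λ * ρ).trace).re) ≤ 1 := by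
    have h0 := Real.sqrt_le_sqrt hΛρ1
    rwa [Real.sqrt_one] at h0
  have s2 : Real.sqrt (((((s - 1) * (s - 1)) * ρ).trace).re) ≤ Real.sqrt ε :=
    Real.sqrt_le_sqrt hTb
  have snn : 0 ≤ Real.sqrt (((((s - 1) * (s - 1)) * ρ).trace).re) := Real.sqrt_nonneg _
  have snn2 : 0 ≤ Real.sqrt (((Λ * ρ).trace).re) := Real.sqrt_nonneg _
  have sεnn : 0 ≤ Real.sqrt ε := Real.sqrt_nonneg _
  rw [hWtr, hsplit]
  nlinarith [e1, e2, s1, s2, snn, snn2, sεnn]
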